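/- Let f : ℤ → ℝ satisfy f(τ) = f(τ-1) + I(τ). Suppose additionally that the increments are uniformly bounded: |I(τ)| ≤ M for all τ. Then for any weights α_1,...,α_{T_h} ∈ ℝ with Σ α_k = 1, we have |f(τ) − Σ_{k=1}^{T_h} α_k f(τ-k)| ≤ M · Σ_{k=0}^{T_h-1} |1 − Σ_{j=1}^{k} α_j|. -/

import Mathlib

/-- Quantitative version of Corollary 1.1 of LightWeather: if the increments
are uniformly bounded by `M`, then the autoregressive prediction error of any
linear combination with weights summing to 1 is bounded by `M` times the
ℓ¹-norm of the cumulative complement weights. -/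
theorem lightweather_quantitative_bound
    (f I : ℤ → ℝ) (hrec : ∀ τ : ℤ, f τ = f (τ - 1) + I τ)
    (M : ℝ) (hM : ∀ τ : ℤ, |I τ| ≤ M)
    (T_h : ℕ) (hT : 1 ≤ T_h) (α : ℕ → ℝ)
    (hα : ∑ k ∈ Finset.Icc 1 T_h, α k = 1) :
    ∀ τ : ℤ,
      |f τ - ∑ k ∈ Finset.Icc 1 T_h, α k * f (τ - (k : ℤ))|
        ≤ M * ∑ k ∈ Finset.range T_h, |1 - ∑ j ∈ Finset.Icc 1 k, α j| := by
  intro τ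
  -- telescoping
  have key : ∀ k : ℕ, f τ - f (τ - k) = ∑ j ∈ Finset.range k, I (τ - j) := by
    intro k
    induction k with
    | zero => simp
    | succ k ih =>
      have h := hrec (τ - k)
      have hc : (τ - ((k : ℕ) + 1 : ℕ) : ℤ) = τ - k - 1 := by push_cast; ring
      rw [Finset.sum_range_succ, ← ih, hc]
      linarith
  have herr : f τ - ∑ k ∈ Finset.Icc 1 T_h, α k * f (τ - (k : ℤ))
      = ∑ j ∈ Finset.range T_h, (1 - ∑ i ∈ Finset.Icc 1 j, α i) * I (τ - j) := by
    have h1 : f τ - ∑ k ∈ Finset.Icc 1 T_h, α k * f (τ - (k : ℤ))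
        = ∑ k ∈ Finset.Icc 1 T_h, α k * (f τ - f (τ - (k : ℤ))) := by
      rw [Finset.sum_congr rfl (fun k _ => mul_sub (α k) (f τ) (f (τ - (k : ℤ)))),
        Finset.sum_sub_distrib, ← Finset.sum_mul, hα]
      ring
    rw [h1]
    have h2 : ∑ k ∈ Finset.Icc 1 T_h, α k * (f τ - f (τ - (k : ℤ)))
        = ∑ k ∈ Finset.Icc 1 T_h, ∑ j ∈ Finset.range T_h,
            (if j < k then α k * I (τ - j) else 0) := by
      apply Finset.sum_congr rfl
      intro k hk
      rw [key k, Finset.mul_sum, ← Finset.sum_filter]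
      apply Finset.sum_congr
      · ext j
        simp only [Finset.mem_filter, Finset.mem_range]
        have hkT : k ≤ T_h := (Finset.mem_Icc.mp hk).2
        omega
      · intros; rfl
    rw [h2, Finset.sum_comm]
    apply Finset.sum_congr rfl
    intro j hj
    have hjT : j ≤ T_h := le_of_lt (Finset.mem_range.mp hj)
    have h3 : ∑ k ∈ Finset.Icc 1 T_h, (if j < k then α k * I (τ - j) else 0)
        = ∑ k ∈ Finset.Ioc j T_h, α k * I (τ - j) := by
      rw [← Finset.sum_filter]
      apply Finset.sum_congr
      · ext k
        simp only [Finset.mem_filter, Finset.mem_Icc, Finset.mem_Ioc]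
        omega
      · intros; rfl
    rw [h3, ← Finset.sum_mul]
    have h4 : ∑ i ∈ Finset.Ioc 0 j, α i + ∑ k ∈ Finset.Ioc j T_h, α k
        = ∑ k ∈ Finset.Ioc 0 T_h, α k :=
      Finset.sum_Ioc_consecutive α (Nat.zero_le j) hjT
    have hIcc : ∀ n : ℕ, Finset.Icc 1 n = Finset.Ioc 0 n := fun n => by
      ext x; simp [Finset.mem_Icc, Finset.mem_Ioc]; omega
    rw [hIcc] at hα ⊢
    have : ∑ k ∈ Finset.Ioc j T_h, α k = 1 - ∑ i ∈ Finset.Ioc 0 j, α i := by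
      rw [← hα]; linarith
    rw [this]
  rw [herr, Finset.mul_sum]
  refine le_trans (Finset.abs_sum_le_sum_abs _ _) (Finset.sum_le_sum ?_)
  intro j _
  rw [abs_mul, mul_comm]
  exact mul_le_mul_of_nonneg_right (hM (τ - j)) (abs_nonneg _)
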